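/- If δ is a real number with 2π/3 < δ < π and sin(π − δ)·sin(δ − π/3) = sin(π/3)·sin(2δ − 4π/3), then 8·(cos δ)² = 5 and tan δ = −√15/5. -/
import Mathlib


open Real

/-- Coolsaet's equality for the `f = 12` earth map tiling (Proposition 7.6):
the solution with `2π/3 < δ < π` satisfies `8 cos² δ = 5` and `tan δ = -√15/5`. -/
theorem stmt_12 (δ : ℝ) (h1 : 2 * π / 3 < δ) (h2 : δ < π)
    (h : Real.sin (π - δ) * Real.sin (δ - π / 3) =
      Real.sin (π / 3) * Real.sin (2 * δ - 4 * π / 3)) :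
    8 * Real.cos δ ^ 2 = 5 ∧ Real.tan δ = -Real.sqrt 15 / 5 := by
  have pyth := Real.sin_sq_add_cos_sq δ
  have h3 : Real.sqrt 3 * Real.sqrt 3 = 3 := Real.mul_self_sqrt (by norm_num)
  have s43 : Real.sin (4 * π / 3) = -(Real.sqrt 3 / 2) := by
    have e : (4 * π / 3 : ℝ) = π + π / 3 := by ring
    rw [e, Real.sin_add]
    simp [Real.sin_pi_div_three]
  have c43 : Real.cos (4 * π / 3) = -(1 / 2) := by
    have e : (4 * π / 3 : ℝ) = π + π / 3 := by ring
    rw [e, Real.cos_add]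
    simp [Real.cos_pi_div_three]
  rw [Real.sin_pi_sub, Real.sin_sub, Real.sin_sub, Real.sin_two_mul, Real.cos_two_mul,
    Real.sin_pi_div_three, Real.cos_pi_div_three, s43, c43] at h
  have key : 8 * Real.cos δ ^ 2 = 5 := by
    linear_combination (-4) * h + 2 * pyth + (1 - 2 * Real.cos δ ^ 2) * h3
  refine ⟨key, ?_⟩
  have hc : Real.cos δ < 0 := by
    apply Real.cos_neg_of_pi_div_two_lt_of_lt
    · nlinarith [Real.pi_pos]
    · nlinarith [Real.pi_pos]
  have hs : 0 < Real.sin δ := Real.sin_pos_of_pos_of_lt_pi (by nlinarith [Real.pi_pos]) h2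
  have hs2 : Real.sin δ ^ 2 = 3 / 8 := by nlinarith [pyth, key]
  have hc2 : Real.cos δ ^ 2 = 5 / 8 := by linarith [key]
  have h15 : Real.sqrt 15 * Real.sqrt 15 = 15 := Real.mul_self_sqrt (by norm_num)
  have e1 : 5 * Real.sin δ = Real.sqrt (75 / 8) := by
    rw [show (75 / 8 : ℝ) = (5 * Real.sin δ) ^ 2 by nlinarith [hs2],
      Real.sqrt_sq (by positivity)]
  have e2 : Real.sqrt 15 * (-Real.cos δ) = Real.sqrt (75 / 8) := by
    rw [show (75 / 8 : ℝ) = (Real.sqrt 15 * (-Real.cos δ)) ^ 2 by nlinarith [hc2, h15],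
      Real.sqrt_sq (mul_nonneg (Real.sqrt_nonneg _) (by linarith))]
  have hcne : Real.cos δ ≠ 0 := ne_of_lt hc
  rw [Real.tan_eq_sin_div_cos]
  field_simp
  linarith [e1, e2]
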